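/- Let T be the infinite virtually cyclic setting: G infinite virtually cyclic with a ∈ G generating a finite-index normal subgroup, and let Q_g for g ∈ G be the cocycle partitions of a Shannon cocycle κ : G × X → H. Then for all n, m ∈ ℕ: (1/[G:⟨a^m⟩]) H(Q_{a^m}) ≥ (1/[G:⟨a^{nm}⟩]) H(Q_{a^{nm}}), i.e., the sequence m ↦ (1/[G:⟨a^m⟩]) H(Q_{a^m}) is decreasing along divisibility. -/

import Mathlib

open MeasureTheory Real

lemma negMulLog_tsum_le {ι : Type*} [Countable ι] (p : ι → ℝ) (hp : ∀ i, 0 ≤ p i)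
    (hps : Summable p) (hns : Summable fun i => negMulLog (p i)) :
    negMulLog (∑' i, p i) ≤ ∑' i, negMulLog (p i) := by
  set T := ∑' i, p i with hT
  have hT0 : 0 ≤ T := tsum_nonneg hp
  have h1 : negMulLog T = ∑' i, p i * (-log T) := by
    rw [tsum_mul_right, ← hT, negMulLog]; ring
  rw [h1]
  refine Summable.tsum_le_tsum (fun i => ?_) (hps.mul_right _) hns
  rcases eq_or_lt_of_le (hp i) with h | h
  · simp [← h, negMulLog]
  · have hle : p i ≤ T := Summable.le_tsum hps i fun j _ => hp j
    have : log (p i) ≤ log T := Real.log_le_log h hle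
    have := mul_le_mul_of_nonneg_left (neg_le_neg this) (hp i)
    simpa [negMulLog, mul_comm, mul_neg] using this


lemma entropy_joint {α β : Type*} [Countable α] [Countable β]
    (q : α → β → ℝ) (pA : α → ℝ) (pB : β → ℝ)
    (hq : ∀ a b, 0 ≤ q a b)
    (hA : ∀ a, HasSum (fun b => q a b) (pA a))
    (hB : ∀ b, HasSum (fun a => q a b) (pB b))
    (hAs : Summable pA) (hBs : Summable pB)
    (htotA : ∑' a, pA a = 1) (htotB : ∑' b, pB b = 1)
    (hEA : Summable fun a => negMulLog (pA a))
    (hEB : Summable fun b => negMulLog (pB b)) :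
    Summable (fun ab : α × β => negMulLog (q ab.1 ab.2)) ∧
      ∑' ab : α × β, negMulLog (q ab.1 ab.2)
        ≤ (∑' a, negMulLog (pA a)) + ∑' b, negMulLog (pB b) := by
  have hpA0 : ∀ a, 0 ≤ pA a := fun a => (hA a).nonneg (hq a)
  have hpB0 : ∀ b, 0 ≤ pB b := fun b => (hB b).nonneg (fun a => hq a b)
  have hpA1 : ∀ a, pA a ≤ 1 := fun a => htotA ▸ Summable.le_tsum hAs a fun j _ => hpA0 j
  have hpB1 : ∀ b, pB b ≤ 1 := fun b => htotB ▸ Summable.le_tsum hBs b fun j _ => hpB0 j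
  have hqA : ∀ a b, q a b ≤ pA a := fun a b => le_hasSum (hA a) b fun j _ => hq a j
  have hqB : ∀ a b, q a b ≤ pB b := fun a b => le_hasSum (hB b) a fun j _ => hq j b
  -- f1
  have hinner1 : (fun a => ∑' b, q a b * (-log (pA a))) = fun a => negMulLog (pA a) := by
    funext a; rw [tsum_mul_right, (hA a).tsum_eq, negMulLog]; ring
  have hS1 : Summable (fun ab : α × β => q ab.1 ab.2 * (-log (pA ab.1))) :=
    (summable_prod_of_nonneg
      (fun ab => mul_nonneg (hq _ _) (neg_nonneg.2 (log_nonpos (hpA0 _) (hpA1 _))))).2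
      ⟨fun a => (hA a).summable.mul_right (-log (pA a)), hinner1 ▸ hEA⟩
  have ht1 : ∑' ab : α × β, q ab.1 ab.2 * (-log (pA ab.1)) = ∑' a, negMulLog (pA a) := by
    rw [Summable.tsum_prod' hS1 (fun a => (hA a).summable.mul_right (-log (pA a)))]
    exact congrArg tsum hinner1
  -- f2 via swap
  have hinner2 : (fun b => ∑' a, q a b * (-log (pB b))) = fun b => negMulLog (pB b) := by
    funext b; rw [tsum_mul_right, (hB b).tsum_eq, negMulLog]; ring
  have hSg2 : Summable (fun ba : β × α => q ba.2 ba.1 * (-log (pB ba.1))) :=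
    (summable_prod_of_nonneg
      (fun ba => mul_nonneg (hq _ _) (neg_nonneg.2 (log_nonpos (hpB0 _) (hpB1 _))))).2
      ⟨fun b => (hB b).summable.mul_right (-log (pB b)), hinner2 ▸ hEB⟩
  have hS2 : Summable (fun ab : α × β => q ab.1 ab.2 * (-log (pB ab.2))) :=
    (Equiv.prodComm α β).summable_iff.2 hSg2
  have ht2 : ∑' ab : α × β, q ab.1 ab.2 * (-log (pB ab.2)) = ∑' b, negMulLog (pB b) := by
    have he := (Equiv.prodComm α β).tsum_eq (fun ba : β × α => q ba.2 ba.1 * (-log (pB ba.1)))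
    rw [show (∑' ab : α × β, q ab.1 ab.2 * (-log (pB ab.2)))
        = ∑' ab : α × β, (fun ba : β × α => q ba.2 ba.1 * (-log (pB ba.1)))
            ((Equiv.prodComm α β) ab) from rfl, he, Summable.tsum_prod' hSg2 (fun b => (hB b).summable.mul_right (-log (pB b)))]
    exact congrArg tsum hinner2
  -- q summable, tsum 1
  have hinnerq : (fun a => ∑' b, q a b) = pA := by
    funext a; exact (hA a).tsum_eq
  have hSq : Summable (fun ab : α × β => q ab.1 ab.2) :=
    (summable_prod_of_nonneg (fun ab => hq ab.1 ab.2)).2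
      ⟨fun a => (hA a).summable, hinnerq ▸ hAs⟩
  have htq : ∑' ab : α × β, q ab.1 ab.2 = 1 := by
    rw [Summable.tsum_prod' hSq (fun a => (hA a).summable), congrArg tsum hinnerq, htotA]
  -- product of marginals
  have hSprod : Summable (fun ab : α × β => pA ab.1 * pB ab.2) :=
    hAs.mul_of_nonneg hBs hpA0 hpB0
  have htprod : ∑' ab : α × β, pA ab.1 * pB ab.2 = 1 := by
    rw [Summable.tsum_prod' hSprod (fun a => hBs.mul_left (pA a))]
    simp only [tsum_mul_left, htotB, mul_one, htotA]
  have hS3 : Summable (fun ab : α × β => pA ab.1 * pB ab.2 - q ab.1 ab.2) := hSprod.sub hSq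
  have ht3 : ∑' ab : α × β, (pA ab.1 * pB ab.2 - q ab.1 ab.2) = 0 := by
    rw [Summable.tsum_sub hSprod hSq, htprod, htq]; ring
  -- pointwise bound
  have hSr : Summable (fun ab : α × β => q ab.1 ab.2 * (-log (pA ab.1))
      + q ab.1 ab.2 * (-log (pB ab.2)) + (pA ab.1 * pB ab.2 - q ab.1 ab.2)) :=
    (hS1.add hS2).add hS3
  have hpt : ∀ ab : α × β, negMulLog (q ab.1 ab.2) ≤ q ab.1 ab.2 * (-log (pA ab.1))
      + q ab.1 ab.2 * (-log (pB ab.2)) + (pA ab.1 * pB ab.2 - q ab.1 ab.2) := by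
    rintro ⟨a, b⟩
    simp only
    rcases eq_or_lt_of_le (hq a b) with h | h
    · rw [← h]
      simp only [negMulLog_zero, neg_zero, mul_zero, zero_mul, sub_zero, zero_add, add_zero]
      exact mul_nonneg (hpA0 a) (hpB0 b)
    · have hA0 : 0 < pA a := lt_of_lt_of_le h (hqA a b)
      have hB0 : 0 < pB b := lt_of_lt_of_le h (hqB a b)
      have key := Real.log_le_sub_one_of_pos (show 0 < pA a * pB b / q a b by positivity)
      rw [Real.log_div (by positivity) h.ne', Real.log_mul hA0.ne' hB0.ne'] at key
      have h4 := mul_le_mul_of_nonneg_left key h.le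
      have h2 : q a b * (pA a * pB b / q a b) = pA a * pB b := by field_simp
      simp only [negMulLog]
      nlinarith [h4, h2]
  have hSE : Summable (fun ab : α × β => negMulLog (q ab.1 ab.2)) :=
    Summable.of_nonneg_of_le
      (fun ab => negMulLog_nonneg (hq ab.1 ab.2) (le_trans (hqA ab.1 ab.2) (hpA1 ab.1)))
      hpt hSr
  refine ⟨hSE, ?_⟩
  calc ∑' ab : α × β, negMulLog (q ab.1 ab.2)
      ≤ ∑' ab : α × β, (q ab.1 ab.2 * (-log (pA ab.1))
          + q ab.1 ab.2 * (-log (pB ab.2)) + (pA ab.1 * pB ab.2 - q ab.1 ab.2)) :=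
        Summable.tsum_le_tsum hpt hSE hSr
    _ = (∑' a, negMulLog (pA a)) + ∑' b, negMulLog (pB b) := by
        rw [Summable.tsum_add (hS1.add hS2) hS3, Summable.tsum_add hS1 hS2, ht1, ht2, ht3]; ring

lemma entropy_map_le {ι β : Type*} [Countable ι] [Countable β]
    (p : ι → ℝ) (q : β → ℝ) (pr : ι → β)
    (hp : ∀ i, 0 ≤ p i)
    (hq : ∀ b, HasSum (fun i : {i // pr i = b} => p i.1) (q b))
    (hq1 : ∀ b, q b ≤ 1)
    (hnp : Summable fun i => negMulLog (p i)) :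
    ∑' b, negMulLog (q b) ≤ ∑' i, negMulLog (p i) := by
  classical
  have hsig : Summable fun x : Σ b, {i // pr i = b} =>
      negMulLog (p ((Equiv.sigmaFiberEquiv pr) x)) :=
    (Equiv.sigmaFiberEquiv pr).summable_iff.2 hnp
  have hsignn : ∀ x : Σ b, {i // pr i = b},
      0 ≤ negMulLog (p ((Equiv.sigmaFiberEquiv pr) x)) := by
    intro x
    refine negMulLog_nonneg (hp _) ?_
    exact le_trans (le_hasSum (hq (pr ((Equiv.sigmaFiberEquiv pr) x)))
      ⟨(Equiv.sigmaFiberEquiv pr) x, rfl⟩ fun j _ => hp _) (hq1 _)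
  have hee : ∀ (b : β) (c : {i // pr i = b}), (Equiv.sigmaFiberEquiv pr) ⟨b, c⟩ = c.1 :=
    fun _ _ => rfl
  have hfun : ∀ b : β, (fun c : {i // pr i = b} =>
      negMulLog (p ((Equiv.sigmaFiberEquiv pr) ⟨b, c⟩))) = fun c => negMulLog (p c.1) :=
    fun b => funext fun c => congrArg (fun y => negMulLog (p y)) (hee b c)
  have hfib' := (summable_sigma_of_nonneg hsignn).1 hsig
  have hfib2 : ∀ b, Summable fun c : {i // pr i = b} =>
      negMulLog (p ((Equiv.sigmaFiberEquiv pr) ⟨b, c⟩)) := hfib'.1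
  have hsum2' : Summable fun b => ∑' c : {i // pr i = b},
      negMulLog (p ((Equiv.sigmaFiberEquiv pr) ⟨b, c⟩)) := hfib'.2
  have hfib : ∀ b, Summable fun i : {i // pr i = b} => negMulLog (p i.1) := by
    intro b; rw [← hfun b]; exact hfib2 b
  have hsum2 : Summable fun b => ∑' i : {i // pr i = b}, negMulLog (p i.1) := by
    simpa only [hfun] using hsum2'
  have hpt : ∀ b, negMulLog (q b) ≤ ∑' i : {i // pr i = b}, negMulLog (p i.1) := by
    intro b
    have h1 : negMulLog (q b) = negMulLog (∑' i : {i // pr i = b}, p i.1) := by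
      rw [(hq b).tsum_eq]
    rw [h1]
    exact negMulLog_tsum_le _ (fun i => hp _) (hq b).summable (hfib b)
  have hql : Summable fun b => negMulLog (q b) :=
    Summable.of_nonneg_of_le
      (fun b => negMulLog_nonneg ((hq b).nonneg fun i => hp _) (hq1 b)) hpt hsum2
  calc ∑' b, negMulLog (q b) ≤ ∑' b, ∑' i : {i // pr i = b}, negMulLog (p i.1) :=
        Summable.tsum_le_tsum hpt hql hsum2
    _ = ∑' b, ∑' c : {i // pr i = b}, negMulLog (p ((Equiv.sigmaFiberEquiv pr) ⟨b, c⟩)) :=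
        tsum_congr fun b => by rw [hfun b]
    _ = ∑' x : Σ b, {i // pr i = b}, negMulLog (p ((Equiv.sigmaFiberEquiv pr) x)) :=
        (Summable.tsum_sigma' (f := fun x : Σ b, {i // pr i = b} =>
          negMulLog (p ((Equiv.sigmaFiberEquiv pr) x))) hfib2 hsig).symm
    _ = ∑' i, negMulLog (p i) := (Equiv.sigmaFiberEquiv pr).tsum_eq (fun i => negMulLog (p i))


lemma index_zpowers_pow {G : Type*} [Group G] (b : G) (hb : ¬ IsOfFinOrder b) (n : ℕ) :
    (Subgroup.zpowers (b ^ n)).index = n * (Subgroup.zpowers b).index := by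
  have hinj : Function.Injective fun k : ℤ => b ^ k :=
    injective_zpow_iff_not_isOfFinOrder.2 hb
  have hcom : Subgroup.comap (zpowersHom G b) (Subgroup.zpowers (b ^ n))
      = AddSubgroup.toSubgroup (AddSubgroup.zmultiples (n : ℤ)) := by
    ext z
    rw [Subgroup.mem_comap, Subgroup.mem_zpowers_iff]
    constructor
    · rintro ⟨k, hk⟩
      have hk' : b ^ ((n : ℤ) * k) = b ^ (Multiplicative.toAdd z) := by
        rw [zpow_mul, zpow_natCast]
        exact hk
      have := hinj hk'
      refine ⟨k, ?_⟩
      simp only [smul_eq_mul]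
      rw [mul_comm]; exact this
    · rintro ⟨k, hk⟩
      refine ⟨k, ?_⟩
      simp only [smul_eq_mul] at hk
      show (b ^ n) ^ k = b ^ Multiplicative.toAdd z
      rw [← zpow_natCast b n, ← zpow_mul, show (n : ℤ) * k = k * n from mul_comm _ _, hk]
  have hrel : (Subgroup.zpowers (b ^ n)).relIndex (Subgroup.zpowers b) = n := by
    have h1 := Subgroup.relIndex_comap (H := Subgroup.zpowers (b ^ n)) (zpowersHom G b) (⊤ : Subgroup (Multiplicative ℤ))
    rw [Subgroup.relIndex_top_right, hcom, AddSubgroup.index_toSubgroup, Int.index_zmultiples,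
      Int.natAbs_natCast] at h1
    rw [← MonoidHom.range_eq_map, Subgroup.range_zpowersHom] at h1
    exact h1.symm
  have hle : Subgroup.zpowers (b ^ n) ≤ Subgroup.zpowers b :=
    Subgroup.zpowers_le.2 ⟨(n : ℤ), zpow_natCast b n⟩
  rw [← Subgroup.relIndex_mul_index hle, hrel]


lemma hasSum_meas {X ι : Type*} [MeasurableSpace X] (μ : Measure X) [IsFiniteMeasure μ]
    [Countable ι] (A : ι → Set X) (hmeas : ∀ i, MeasurableSet (A i))
    (hdisj : Pairwise (Function.onFun Disjoint A)) (U : Set X) (hU : U = ⋃ i, A i) :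
    HasSum (fun i => (μ (A i)).toReal) ((μ U).toReal) := by
  have h1 : μ U = ∑' i, μ (A i) := by rw [hU, measure_iUnion hdisj hmeas]
  have hne : ∑' i, μ (A i) ≠ ⊤ := by rw [← h1]; exact measure_ne_top μ U
  have hs : Summable fun i => (μ (A i)).toReal := ENNReal.summable_toReal hne
  have ht : ∑' i, (μ (A i)).toReal = (μ U).toReal := by
    rw [h1, ENNReal.tsum_toReal_eq (fun i => measure_ne_top μ (A i))]
  exact ht ▸ hs.hasSum

lemma entropy_mul_le {X H' : Type*} [MeasurableSpace X] [Countable H']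
    (μ : Measure X) [IsProbabilityMeasure μ] (f g : X → H') (op : H' → H' → H')
    (hf : ∀ s, MeasurableSet {x | f x = s}) (hg : ∀ s, MeasurableSet {x | g x = s})
    (hEf : Summable fun s => negMulLog ((μ {x | f x = s}).toReal))
    (hEg : Summable fun s => negMulLog ((μ {x | g x = s}).toReal)) :
    (∑' s, negMulLog ((μ {x | op (f x) (g x) = s}).toReal))
      ≤ (∑' s, negMulLog ((μ {x | f x = s}).toReal))
        + ∑' s, negMulLog ((μ {x | g x = s}).toReal) := by
  classical
  have hq0 : ∀ s t : H', 0 ≤ (μ ({x | f x = s} ∩ {x | g x = t})).toReal :=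
    fun s t => ENNReal.toReal_nonneg
  have hA : ∀ s, HasSum (fun t => (μ ({x | f x = s} ∩ {x | g x = t})).toReal) ((μ {x | f x = s}).toReal) := by
    intro s
    refine hasSum_meas μ _ (fun t => (hf s).inter (hg t)) ?_ _ ?_
    · intro t t' htt'
      simp only [Function.onFun, Set.disjoint_left]
      rintro x ⟨-, hx2⟩ ⟨-, hx4⟩
      exact htt' (hx2.symm.trans hx4)
    · ext x
      simp only [Set.mem_iUnion, Set.mem_inter_iff, Set.mem_setOf_eq]
      exact ⟨fun h => ⟨g x, h, rfl⟩, fun ⟨t, h, _⟩ => h⟩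
  have hB : ∀ t, HasSum (fun s => (μ ({x | f x = s} ∩ {x | g x = t})).toReal) ((μ {x | g x = t}).toReal) := by
    intro t
    refine hasSum_meas μ _ (fun s => (hf s).inter (hg t)) ?_ _ ?_
    · intro s s' hss'
      simp only [Function.onFun, Set.disjoint_left]
      rintro x ⟨hx1, -⟩ ⟨hx3, -⟩
      exact hss' (hx1.symm.trans hx3)
    · ext x
      simp only [Set.mem_iUnion, Set.mem_inter_iff, Set.mem_setOf_eq]
      exact ⟨fun h => ⟨f x, rfl, h⟩, fun ⟨s, _, h⟩ => h⟩
  have htotf : HasSum (fun s => (μ {x | f x = s}).toReal) 1 := by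
    have := hasSum_meas μ (fun s => {x | f x = s}) hf ?_ Set.univ ?_
    · simpa using this
    · intro s s' hss'
      simp only [Function.onFun, Set.disjoint_left, Set.mem_setOf_eq]
      exact fun x hx1 hx2 => hss' (hx1.symm.trans hx2)
    · ext x; simp [Set.mem_iUnion]
  have htotg : HasSum (fun t => (μ {x | g x = t}).toReal) 1 := by
    have := hasSum_meas μ (fun t => {x | g x = t}) hg ?_ Set.univ ?_
    · simpa using this
    · intro s s' hss'
      simp only [Function.onFun, Set.disjoint_left, Set.mem_setOf_eq]
      exact fun x hx1 hx2 => hss' (hx1.symm.trans hx2)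
    · ext x; simp [Set.mem_iUnion]
  obtain ⟨hJS, hJle⟩ := entropy_joint (fun s t => (μ ({x | f x = s} ∩ {x | g x = t})).toReal) _ _ hq0 hA hB htotf.summable htotg.summable
    htotf.tsum_eq htotg.tsum_eq hEf hEg
  have hcoarse : (∑' s, negMulLog ((μ {x | op (f x) (g x) = s}).toReal))
      ≤ ∑' st : H' × H', negMulLog ((μ ({x | f x = st.1} ∩ {x | g x = st.2})).toReal) := by
    refine entropy_map_le (fun st : H' × H' => (μ ({x | f x = st.1} ∩ {x | g x = st.2})).toReal)
      (fun b => (μ {x | op (f x) (g x) = b}).toReal) (fun st => op st.1 st.2)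
      (fun st => hq0 _ _) ?_ ?_ hJS
    · intro b
      refine hasSum_meas μ
        (fun i : {st : H' × H' // op st.1 st.2 = b} => {x | f x = i.1.1} ∩ {x | g x = i.1.2})
        (fun i => (hf i.1.1).inter (hg i.1.2)) ?_ {x | op (f x) (g x) = b} ?_
      · rintro ⟨⟨s, t⟩, hst⟩ ⟨⟨s', t'⟩, hst'⟩ hne
        simp only [Function.onFun, Set.disjoint_left]
        rintro x ⟨hx1, hx2⟩ ⟨hx3, hx4⟩
        simp only [Set.mem_setOf_eq] at hx1 hx2 hx3 hx4
        apply hne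
        apply Subtype.ext
        simp only [Prod.mk.injEq]
        exact ⟨hx1.symm.trans hx3, hx2.symm.trans hx4⟩
      · ext x
        simp only [Set.mem_iUnion, Set.mem_inter_iff, Set.mem_setOf_eq]
        constructor
        · intro h
          exact ⟨⟨(f x, g x), h⟩, rfl, rfl⟩
        · rintro ⟨⟨⟨s, t⟩, hst⟩, hx1, hx2⟩
          simp only [Set.mem_setOf_eq] at hx1 hx2
          rw [← hst]
          simp only [← hx1, ← hx2]
    · intro b
      calc (μ {x | op (f x) (g x) = b}).toReal ≤ (μ Set.univ).toReal :=
            ENNReal.toReal_mono (measure_ne_top μ _) (measure_mono (Set.subset_univ _))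
        _ = 1 := by simp
  exact le_trans hcoarse hJle

/-- Monotonicity along divisibility of the normalized cocycle-partition
entropies `m ↦ H(Q_{a^m}) / [G : ⟨a^m⟩]` for a Shannon cocycle over an infinite
virtually cyclic group. -/
theorem stmt_10 {G H X : Type*} [Group G] [Group H] [Countable G] [Countable H]
    [Infinite G] [MeasurableSpace X] [MulAction G X]
    (hmG : ∀ g : G, Measurable (fun x : X => g • x))
    (μ : Measure X) [IsProbabilityMeasure μ] [SMulInvariantMeasure G X μ]
    (hfree : ∀ (g : G) (x : X), g • x = x → g = 1)
    (a : G) (hanorm : (Subgroup.zpowers a).Normal) (haind : (Subgroup.zpowers a).index ≠ 0)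
    (κ : G → X → H) (hκmeas : ∀ (g : G) (s : H), MeasurableSet {x | κ g x = s})
    (hcoc : ∀ (g h : G) (x : X), κ (g * h) x = κ g (h • x) * κ h x)
    (hShannon : ∀ g : G, Summable (fun s : H => negMulLog ((μ {x | κ g x = s}).toReal))) :
    ∀ n m : ℕ, 1 ≤ n → 1 ≤ m →
      (∑' s : H, negMulLog ((μ {x | κ (a ^ (n * m)) x = s}).toReal))
          / ((Subgroup.zpowers (a ^ (n * m))).index : ℝ)
        ≤ (∑' s : H, negMulLog ((μ {x | κ (a ^ m) x = s}).toReal))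
          / ((Subgroup.zpowers (a ^ m)).index : ℝ) := by
  intro n m hn hm
  -- `a` has infinite order
  have hano : ¬ IsOfFinOrder a := by
    rw [← orderOf_eq_zero_iff, ← Nat.card_zpowers]
    have h1 := Subgroup.index_mul_card (Subgroup.zpowers a)
    have h2 : Nat.card G = 0 := Nat.card_eq_zero_of_infinite
    rw [h2] at h1
    exact (Nat.mul_eq_zero.1 h1).resolve_left haind
  have hidx : ∀ k : ℕ, (Subgroup.zpowers (a ^ k)).index = k * (Subgroup.zpowers a).index :=
    fun k => index_zpowers_pow a hano k
  -- the key entropy inequality by induction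
  have key : ∀ k : ℕ, 1 ≤ k →
      (∑' s : H, negMulLog ((μ {x | κ (a ^ (k * m)) x = s}).toReal))
        ≤ k * ∑' s : H, negMulLog ((μ {x | κ (a ^ m) x = s}).toReal) := by
    intro k hk
    induction k, hk using Nat.le_induction with
    | base => simp [one_mul]
    | succ k hk ih =>
      have hsplit : a ^ ((k + 1) * m) = a ^ m * a ^ (k * m) := by
        rw [← pow_add]; congr 1; ring
      have hsetEq : ∀ s : H, {x | κ (a ^ ((k + 1) * m)) x = s}
          = {x | (κ (a ^ m) ((a ^ (k * m)) • x)) * (κ (a ^ (k * m)) x) = s} := by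
        intro s; ext x
        simp only [Set.mem_setOf_eq, hsplit, hcoc]
      have hmp : ∀ s : H, μ {x | κ (a ^ m) ((a ^ (k * m)) • x) = s} = μ {x | κ (a ^ m) x = s} :=
        fun s => SMulInvariantMeasure.measure_preimage_smul (μ := μ) (a ^ (k * m))
          (hκmeas (a ^ m) s)
      have hEf : Summable fun s : H =>
          negMulLog ((μ {x | κ (a ^ m) ((a ^ (k * m)) • x) = s}).toReal) := by
        simp only [hmp]; exact hShannon (a ^ m)
      have hstep := entropy_mul_le μ (fun x => κ (a ^ m) ((a ^ (k * m)) • x))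
        (fun x => κ (a ^ (k * m)) x) (fun u v => u * v)
        (fun s => hmG (a ^ (k * m)) (hκmeas (a ^ m) s)) (hκmeas (a ^ (k * m)))
        hEf (hShannon (a ^ (k * m)))
      have e1 : (∑' s : H, negMulLog ((μ {x | κ (a ^ ((k + 1) * m)) x = s}).toReal))
          = ∑' s : H, negMulLog
              ((μ {x | (κ (a ^ m) ((a ^ (k * m)) • x)) * (κ (a ^ (k * m)) x) = s}).toReal) :=
        tsum_congr fun s => by rw [hsetEq s]
      have e2 : (∑' s : H, negMulLog ((μ {x | κ (a ^ m) ((a ^ (k * m)) • x) = s}).toReal))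
          = ∑' s : H, negMulLog ((μ {x | κ (a ^ m) x = s}).toReal) :=
        tsum_congr fun s => by rw [hmp s]
      rw [e1]
      calc (∑' s : H, negMulLog
              ((μ {x | (κ (a ^ m) ((a ^ (k * m)) • x)) * (κ (a ^ (k * m)) x) = s}).toReal))
          ≤ (∑' s : H, negMulLog ((μ {x | κ (a ^ m) ((a ^ (k * m)) • x) = s}).toReal))
            + ∑' s : H, negMulLog ((μ {x | κ (a ^ (k * m)) x = s}).toReal) := hstep
        _ ≤ (∑' s : H, negMulLog ((μ {x | κ (a ^ m) x = s}).toReal))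
            + k * ∑' s : H, negMulLog ((μ {x | κ (a ^ m) x = s}).toReal) := by
              rw [e2]; exact add_le_add_right ih _
        _ = (k + 1 : ℕ) * ∑' s : H, negMulLog ((μ {x | κ (a ^ m) x = s}).toReal) := by
              push_cast; ring
  have hkey := key n hn
  rw [hidx (n * m), hidx m]
  have hd : (0 : ℝ) < ((Subgroup.zpowers a).index : ℝ) :=
    Nat.cast_pos.2 (Nat.pos_of_ne_zero haind)
  have hm' : (0 : ℝ) < (m : ℝ) := by exact_mod_cast hm
  have hn' : (0 : ℝ) < (n : ℝ) := by exact_mod_cast hn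
  push_cast
  rw [div_le_div_iff₀ (by positivity) (by positivity)]
  nlinarith [mul_le_mul_of_nonneg_right hkey
    (mul_nonneg (mul_nonneg hm'.le hd.le) hn'.le), hkey,
    mul_le_mul_of_nonneg_right hkey (mul_nonneg hm'.le hd.le)]
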